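/- Let G₁, G₂, G₃ be closed subspaces of a real Hilbert space G. Let G₁₂ (respectively G₂₃) be the closed subspace generated by G₁ and G₂ (respectively by G₂ and G₃). Suppose G₁ and G₂₃ are quasi-orthogonal with closed span G, and G₁₂ and G₃ are quasi-orthogonal with closed span G. Then G₁, G₂, G₃ are mutually quasi-orthogonal, i.e. there exists A ∈ S(G) with ⟨Ax, Ay⟩ = 0 whenever x ∈ Gᵢ, y ∈ Gⱼ and i ≠ j (and G is the closed span of G₁ ∪ G₂ ∪ G₃). -/

import Mathlib

open ContinuousLinearMap
open scoped InnerProductSpace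

noncomputable section

universe u v w

/-- A bounded operator `T` between real inner product spaces is *Hilbert–Schmidt* if
`∑ᵢ ‖T eᵢ‖²` is finite for some orthonormal (Hilbert) basis `(eᵢ)`. -/
def IsHilbertSchmidt {E : Type u} {F : Type v} [NormedAddCommGroup E] [InnerProductSpace ℝ E]
    [NormedAddCommGroup F] [InnerProductSpace ℝ F] (T : E →L[ℝ] F) : Prop :=
  ∃ (ι : Type u) (b : HilbertBasis ι ℝ E), Summable fun i => ‖T (b i)‖ ^ 2

/-- A bounded operator is invertible with a bounded inverse. -/
def IsBoundedlyInvertible {E : Type u} {F : Type v} [NormedAddCommGroup E]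
    [InnerProductSpace ℝ E] [NormedAddCommGroup F] [InnerProductSpace ℝ F]
    (T : E →L[ℝ] F) : Prop :=
  ∃ S : F →L[ℝ] E, S.comp T = ContinuousLinearMap.id ℝ E ∧
    T.comp S = ContinuousLinearMap.id ℝ F

/-- `A ∈ S(G₁,G₂)`: `A` is invertible with bounded inverse and `1 - (A*A)^{1/2}` is
Hilbert–Schmidt (`(A*A)^{1/2}` being the positive square root of `A*A`). -/
def MemS {G₁ : Type u} {G₂ : Type v}
    [NormedAddCommGroup G₁] [InnerProductSpace ℝ G₁] [CompleteSpace G₁]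
    [NormedAddCommGroup G₂] [InnerProductSpace ℝ G₂] [CompleteSpace G₂]
    (A : G₁ →L[ℝ] G₂) : Prop :=
  IsBoundedlyInvertible A ∧
    ∃ S : G₁ →L[ℝ] G₁, S.IsPositive ∧
      S.comp S = (ContinuousLinearMap.adjoint A).comp A ∧
      IsHilbertSchmidt (ContinuousLinearMap.id ℝ G₁ - S)

/-- `A ∈ S(G)`: `A` is a positive, invertible operator on `G` such that `1 - A` is
Hilbert–Schmidt. -/
def MemSG {G : Type u} [NormedAddCommGroup G] [InnerProductSpace ℝ G] [CompleteSpace G]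
    (A : G →L[ℝ] G) : Prop :=
  A.IsPositive ∧ IsBoundedlyInvertible A ∧
    IsHilbertSchmidt (ContinuousLinearMap.id ℝ G - A)

/-- A family of subspaces of a real Hilbert space is mutually quasi-orthogonal if some
`A ∈ S(G)` maps them to mutually orthogonal subspaces. -/
def MutuallyQuasiOrthogonal {G : Type u} [NormedAddCommGroup G] [InnerProductSpace ℝ G]
    [CompleteSpace G] {ι : Type w} (V : ι → Submodule ℝ G) : Prop :=
  ∃ A : G →L[ℝ] G, MemSG A ∧
    ∀ i j, i ≠ j → ∀ x ∈ V i, ∀ y ∈ V j, ⟪A x, A y⟫_ℝ = 0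


open scoped ENNReal NNReal
set_option linter.unusedSectionVars false
set_option maxHeartbeats 1000000
set_option synthInstance.maxHeartbeats 400000

namespace HSAux

variable {E : Type u} [NormedAddCommGroup E] [InnerProductSpace ℝ E] [CompleteSpace E]

lemma hasSum_sq_inner {ι : Type*} (b : HilbertBasis ι ℝ E) (x : E) :
    HasSum (fun i => ⟪x, b i⟫_ℝ ^ 2) (‖x‖ ^ 2) := by
  have h := b.hasSum_inner_mul_inner x x
  rw [real_inner_self_eq_norm_sq] at h
  have hf : (fun i => ⟪x, b i⟫_ℝ ^ 2) = fun i => ⟪x, b i⟫_ℝ * ⟪b i, x⟫_ℝ := by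
    funext i
    rw [real_inner_comm x (b i), sq]
  rw [hf]; exact h

/-- The Hilbert–Schmidt "sum" in `ℝ≥0∞`. -/
def hsSum (T : E →L[ℝ] E) {ι : Type*} (b : HilbertBasis ι ℝ E) : ℝ≥0∞ :=
  ∑' i, (‖T (b i)‖₊ : ℝ≥0∞) ^ 2

lemma ennreal_norm_sq_eq {κ : Type*} (c : HilbertBasis κ ℝ E) (x : E) :
    (‖x‖₊ : ℝ≥0∞) ^ 2 = ∑' j, ENNReal.ofReal (⟪x, c j⟫_ℝ ^ 2) := by
  have h := hasSum_sq_inner c x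
  have h1 : ENNReal.ofReal (‖x‖ ^ 2) = ∑' j, ENNReal.ofReal (⟪x, c j⟫_ℝ ^ 2) := by
    rw [← h.tsum_eq]
    exact ENNReal.ofReal_tsum_of_nonneg (fun j => sq_nonneg _) h.summable
  rw [← h1, ENNReal.ofReal_pow (norm_nonneg _), ← coe_nnnorm, ENNReal.ofReal_coe_nnreal]

lemma hsSum_eq_adjoint (T : E →L[ℝ] E) {ι κ : Type*} (b : HilbertBasis ι ℝ E)
    (c : HilbertBasis κ ℝ E) :
    hsSum T b = hsSum (ContinuousLinearMap.adjoint T) c := by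
  unfold hsSum
  calc ∑' i, (‖T (b i)‖₊ : ℝ≥0∞) ^ 2
      = ∑' i, ∑' j, ENNReal.ofReal (⟪T (b i), c j⟫_ℝ ^ 2) := by
        simp_rw [ennreal_norm_sq_eq c]
    _ = ∑' j, ∑' i, ENNReal.ofReal (⟪T (b i), c j⟫_ℝ ^ 2) := ENNReal.tsum_comm
    _ = ∑' j, (‖(ContinuousLinearMap.adjoint T) (c j)‖₊ : ℝ≥0∞) ^ 2 := by
        refine tsum_congr fun j => ?_
        rw [ennreal_norm_sq_eq b]
        refine tsum_congr fun i => ?_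
        show ENNReal.ofReal (⟪T (b i), c j⟫_ℝ ^ 2)
            = ENNReal.ofReal (⟪(ContinuousLinearMap.adjoint T) (c j), b i⟫_ℝ ^ 2)
        have h : ⟪(ContinuousLinearMap.adjoint T) (c j), b i⟫_ℝ = ⟪T (b i), c j⟫_ℝ := by
          rw [ContinuousLinearMap.adjoint_inner_left, real_inner_comm]
        rw [h]

lemma hsSum_basis_indep (T : E →L[ℝ] E) {ι κ : Type*} (b : HilbertBasis ι ℝ E)
    (c : HilbertBasis κ ℝ E) : hsSum T b = hsSum T c := by
  rw [hsSum_eq_adjoint T b c, hsSum_eq_adjoint T c c]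

lemma summable_iff_hsSum {ι : Type*} (T : E →L[ℝ] E) (b : HilbertBasis ι ℝ E) :
    (Summable fun i => ‖T (b i)‖ ^ 2) ↔ hsSum T b ≠ ⊤ := by
  have h1 : (Summable fun i => ‖T (b i)‖ ^ 2) ↔ Summable fun i => (‖T (b i)‖₊ ^ 2 : ℝ≥0) := by
    rw [← NNReal.summable_coe]
    simp [NNReal.coe_pow]
  rw [h1, ← ENNReal.tsum_coe_ne_top_iff_summable]
  unfold hsSum
  simp [ENNReal.coe_pow]

lemma isHilbertSchmidt_iff {ι : Type*} (T : E →L[ℝ] E) (b : HilbertBasis ι ℝ E) :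
    IsHilbertSchmidt T ↔ Summable fun i => ‖T (b i)‖ ^ 2 := by
  constructor
  · rintro ⟨ι₀, b₀, h⟩
    rw [summable_iff_hsSum] at h ⊢
    rwa [hsSum_basis_indep T b b₀]
  · intro h
    obtain ⟨w, b₀, -⟩ := exists_hilbertBasis ℝ E
    refine ⟨w, b₀, ?_⟩
    rw [summable_iff_hsSum] at h ⊢
    rwa [hsSum_basis_indep T b₀ b]

variable {T : E →L[ℝ] E}

lemma _root_.IsHilbertSchmidt.adjoint (hT : IsHilbertSchmidt T) :
    IsHilbertSchmidt (ContinuousLinearMap.adjoint T) := by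
  obtain ⟨w, b, -⟩ := exists_hilbertBasis ℝ E
  rw [isHilbertSchmidt_iff _ b, summable_iff_hsSum, ← hsSum_eq_adjoint T b b,
    ← summable_iff_hsSum, ← isHilbertSchmidt_iff T b]
  exact hT

lemma _root_.IsHilbertSchmidt.mul_left (S : E →L[ℝ] E) (hT : IsHilbertSchmidt T) :
    IsHilbertSchmidt (S * T) := by
  obtain ⟨w, b, -⟩ := exists_hilbertBasis ℝ E
  rw [isHilbertSchmidt_iff _ b]
  rw [isHilbertSchmidt_iff _ b] at hT
  refine Summable.of_nonneg_of_le (fun i => by positivity) (fun i => ?_) (hT.mul_left (‖S‖ ^ 2))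
  calc ‖(S * T) (b i)‖ ^ 2 ≤ (‖S‖ * ‖T (b i)‖) ^ 2 := by
        apply pow_le_pow_left₀ (norm_nonneg _)
        rw [ContinuousLinearMap.mul_apply]
        exact S.le_opNorm _
    _ = ‖S‖ ^ 2 * ‖T (b i)‖ ^ 2 := by ring

lemma _root_.IsHilbertSchmidt.mul_right (hT : IsHilbertSchmidt T) (S : E →L[ℝ] E) :
    IsHilbertSchmidt (T * S) := by
  have h : T * S = ContinuousLinearMap.adjoint
      ((ContinuousLinearMap.adjoint S) * (ContinuousLinearMap.adjoint T)) := by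
    simp [ContinuousLinearMap.mul_def, ContinuousLinearMap.adjoint_comp,
      ContinuousLinearMap.adjoint_adjoint]
  rw [h]
  exact (hT.adjoint.mul_left _).adjoint

lemma _root_.IsHilbertSchmidt.add {T' : E →L[ℝ] E} (hT : IsHilbertSchmidt T)
    (hT' : IsHilbertSchmidt T') : IsHilbertSchmidt (T + T') := by
  obtain ⟨w, b, -⟩ := exists_hilbertBasis ℝ E
  rw [isHilbertSchmidt_iff _ b]
  rw [isHilbertSchmidt_iff _ b] at hT hT'
  refine Summable.of_nonneg_of_le (fun i => by positivity) (fun i => ?_)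
    (((hT.mul_left 2).add (hT'.mul_left 2)))
  have h1 : ‖(T + T') (b i)‖ ≤ ‖T (b i)‖ + ‖T' (b i)‖ := norm_add_le _ _
  have h2 : (0:ℝ) ≤ ‖(T + T') (b i)‖ := norm_nonneg _
  nlinarith [sq_nonneg (‖T (b i)‖ - ‖T' (b i)‖), norm_nonneg (T (b i)), norm_nonneg (T' (b i))]

lemma _root_.IsHilbertSchmidt.neg (hT : IsHilbertSchmidt T) : IsHilbertSchmidt (-T) := by
  obtain ⟨w, b, -⟩ := exists_hilbertBasis ℝ E
  rw [isHilbertSchmidt_iff _ b]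
  rw [isHilbertSchmidt_iff _ b] at hT
  simpa using hT

lemma _root_.IsHilbertSchmidt.sub {T' : E →L[ℝ] E} (hT : IsHilbertSchmidt T)
    (hT' : IsHilbertSchmidt T') : IsHilbertSchmidt (T - T') := by
  rw [sub_eq_add_neg]; exact hT.add hT'.neg

end HSAux

namespace OpAux

variable {E : Type u} [NormedAddCommGroup E] [InnerProductSpace ℝ E] [CompleteSpace E]

lemma isBoundedlyInvertible_iff_mul {T : E →L[ℝ] E} :
    IsBoundedlyInvertible T ↔ ∃ S : E →L[ℝ] E, S * T = 1 ∧ T * S = 1 := Iff.rfl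

lemma isPositive_of (T : E →L[ℝ] E) (h1 : IsSelfAdjoint T)
    (h2 : ∀ x, 0 ≤ ⟪T x, x⟫_ℝ) : T.IsPositive :=
  ContinuousLinearMap.isPositive_def'.mpr ⟨h1, h2⟩

lemma _root_.ContinuousLinearMap.IsPositive.inner_nonneg' {T : E →L[ℝ] E} (hT : T.IsPositive) (x : E) :
    0 ≤ ⟪T x, x⟫_ℝ := hT.2 x

/-- self-adjointness as symmetry of the real inner product. -/
lemma _root_.IsSelfAdjoint.inner_symm {T : E →L[ℝ] E} (hT : IsSelfAdjoint T) (u v : E) :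
    ⟪T u, v⟫_ℝ = ⟪u, T v⟫_ℝ := by
  have h : ContinuousLinearMap.adjoint T = T := (ContinuousLinearMap.isSelfAdjoint_iff').mp hT
  conv_lhs => rw [← h]
  rw [ContinuousLinearMap.adjoint_inner_left]

/-- generalized Cauchy–Schwarz for a positive operator. -/
lemma inner_sq_le {T : E →L[ℝ] E} (hT : T.IsPositive) (x y : E) :
    ⟪T x, y⟫_ℝ ^ 2 ≤ ⟪T x, x⟫_ℝ * ⟪T y, y⟫_ℝ := by
  have key : ∀ t : ℝ, 0 ≤ ⟪T y, y⟫_ℝ * (t * t) + (2 * ⟪T x, y⟫_ℝ) * t + ⟪T x, x⟫_ℝ := by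
    intro t
    have h0 : 0 ≤ ⟪T (x + t • y), x + t • y⟫_ℝ := hT.inner_nonneg' _
    have hsym : ⟪T y, x⟫_ℝ = ⟪T x, y⟫_ℝ := by
      rw [hT.isSelfAdjoint.inner_symm y x, real_inner_comm]
    rw [map_add, map_smul] at h0
    simp only [inner_add_left, inner_add_right, inner_smul_left, inner_smul_right,
      RCLike.ofReal_real_eq_id, id_eq, smul_eq_mul, starRingEnd_apply, star_trivial] at h0
    rw [hsym] at h0
    ring_nf at h0 ⊢
    linarith [h0]
  have hd := discrim_le_zero key
  unfold discrim at hd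
  nlinarith [hd]

/-- norm bound for positive operators dominated by `q`. -/
lemma opNorm_le_of_inner_le {T : E →L[ℝ] E} (hT : T.IsPositive) {q : ℝ} (hq : 0 ≤ q)
    (h : ∀ x, ⟪T x, x⟫_ℝ ≤ q * ‖x‖ ^ 2) : ‖T‖ ≤ q := by
  refine T.opNorm_le_bound hq fun x => ?_
  rcases eq_or_lt_of_le (norm_nonneg (T x)) with h0 | h0
  · rw [← h0]; positivity
  · have hcs := inner_sq_le hT x (T x)
    have h1 : ⟪T x, x⟫_ℝ ≤ q * ‖x‖ ^ 2 := h x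
    have h2 : ⟪T (T x), T x⟫_ℝ ≤ q * ‖T x‖ ^ 2 := h (T x)
    have h3 : ⟪T x, T x⟫_ℝ = ‖T x‖ ^ 2 := real_inner_self_eq_norm_sq _
    have h4 : 0 ≤ ⟪T x, x⟫_ℝ := hT.inner_nonneg' x
    have h5 : 0 ≤ ⟪T (T x), T x⟫_ℝ := hT.inner_nonneg' (T x)
    have hab : ⟪T x, x⟫_ℝ * ⟪T (T x), T x⟫_ℝ ≤ (q * ‖x‖ ^ 2) * (q * ‖T x‖ ^ 2) :=
      mul_le_mul h1 h2 h5 (by positivity)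
    have h6 : ‖T x‖ ^ 4 ≤ q ^ 2 * ‖x‖ ^ 2 * ‖T x‖ ^ 2 := by nlinarith [hcs, h3]
    have h7 : ‖T x‖ ^ 2 ≤ q ^ 2 * ‖x‖ ^ 2 := by nlinarith [h6, mul_pos h0 h0]
    nlinarith [h7, h0, mul_nonneg hq (norm_nonneg x)]

/-- a coercive self-adjoint operator is boundedly invertible. -/
lemma isBoundedlyInvertible_of_coercive {T : E →L[ℝ] E} (hsa : IsSelfAdjoint T) {c : ℝ}
    (hc : 0 < c) (h : ∀ x, c * ‖x‖ ^ 2 ≤ ⟪T x, x⟫_ℝ) : IsBoundedlyInvertible T := by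
  have hlow : ∀ x, c * ‖x‖ ≤ ‖T x‖ := by
    intro x
    rcases eq_or_ne x 0 with rfl | hx
    · simp
    · have h1 : c * ‖x‖ ^ 2 ≤ ⟪T x, x⟫_ℝ := h x
      have h2 : ⟪T x, x⟫_ℝ ≤ ‖T x‖ * ‖x‖ := real_inner_le_norm _ _
      have hx' : 0 < ‖x‖ := norm_pos_iff.mpr hx
      nlinarith
  have hker : LinearMap.ker (T : E →ₗ[ℝ] E) = ⊥ := by
    rw [LinearMap.ker_eq_bot']
    intro x hx
    have := hlow x
    rw [show T x = 0 from hx, norm_zero] at this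
    have hx' : ‖x‖ ≤ 0 := by nlinarith
    exact norm_le_zero_iff.mp hx'
  have hanti : AntilipschitzWith (⟨c, hc.le⟩ : ℝ≥0)⁻¹ T := by
    apply T.antilipschitz_of_bound
    intro x
    have h1 : ‖x‖ ≤ c⁻¹ * ‖T x‖ := by
      rw [inv_mul_eq_div, le_div_iff₀ hc]
      nlinarith [hlow x]
    exact h1
  have hclosed : IsClosed (LinearMap.range (T : E →ₗ[ℝ] E) : Set E) := by
    have := hanti.isClosed_range T.uniformContinuous
    convert this using 1
    exact LinearMap.coe_range _
  have hrange : LinearMap.range (T : E →ₗ[ℝ] E) = ⊤ := by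
    have hdense : (LinearMap.range (T : E →ₗ[ℝ] E))ᗮ = ⊥ := by
      rw [Submodule.eq_bot_iff]
      intro y hy
      have h1 : ⟪T y, y⟫_ℝ = 0 := hy (T y) (LinearMap.mem_range_self _ y)
      have h2 := h y
      rw [h1] at h2
      have : ‖y‖ ^ 2 ≤ 0 := by nlinarith
      have : ‖y‖ = 0 := by nlinarith [sq_nonneg ‖y‖, norm_nonneg y]
      exact norm_eq_zero.mp this
    have h3 := Submodule.orthogonal_orthogonal_eq_closure (K := LinearMap.range (T : E →ₗ[ℝ] E))
    rw [hdense, Submodule.bot_orthogonal_eq_top] at h3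
    rw [← hclosed.submodule_topologicalClosure_eq, ← h3]
  refine ⟨((ContinuousLinearEquiv.ofBijective T hker hrange).symm :
      E ≃L[ℝ] E).toContinuousLinearMap, ?_, ?_⟩
  · ext x
    simp only [ContinuousLinearMap.coe_comp', Function.comp_apply,
      ContinuousLinearMap.coe_id', id_eq, ContinuousLinearEquiv.coe_coe]
    exact ContinuousLinearEquiv.ofBijective_symm_apply_apply T hker hrange x
  · ext x
    simp only [ContinuousLinearMap.coe_comp', Function.comp_apply,
      ContinuousLinearMap.coe_id', id_eq, ContinuousLinearEquiv.coe_coe]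
    exact ContinuousLinearEquiv.ofBijective_apply_symm_apply T hker hrange x

end OpAux

namespace SqrtAux

variable {E : Type u} [NormedAddCommGroup E] [InnerProductSpace ℝ E] [CompleteSpace E]


/-- Existence of a coercive positive square root of a coercive self-adjoint operator. -/
theorem exists_sqrt {T : E →L[ℝ] E} (hsa : IsSelfAdjoint T) {c : ℝ} (hc : 0 < c)
    (hcoer : ∀ x, c * ‖x‖ ^ 2 ≤ ⟪T x, x⟫_ℝ) :
    ∃ S : E →L[ℝ] E, S.IsPositive ∧ S * S = T ∧ ∃ δ : ℝ, 0 < δ ∧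
      ∀ x, δ * ‖x‖ ^ 2 ≤ ⟪S x, x⟫_ℝ := by
  classical
  set k : ℝ := ‖T‖ + c with hk
  have hkpos : 0 < k := by positivity
  have hTupper : ∀ x, ⟪T x, x⟫_ℝ ≤ ‖T‖ * ‖x‖ ^ 2 := by
    intro x
    calc ⟪T x, x⟫_ℝ ≤ ‖T x‖ * ‖x‖ := real_inner_le_norm _ _
      _ ≤ ‖T‖ * ‖x‖ * ‖x‖ := by
          have := T.le_opNorm x
          nlinarith [norm_nonneg x, norm_nonneg (T x)]
      _ = ‖T‖ * ‖x‖ ^ 2 := by ring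
  set X : E →L[ℝ] E := 1 - k⁻¹ • T with hX
  set r : ℝ := ‖T‖ / k with hr
  have hr0 : 0 ≤ r := by positivity
  have hr1 : r < 1 := by
    rw [hr, div_lt_one hkpos]
    linarith
  have hXinner : ∀ x, ⟪X x, x⟫_ℝ = ‖x‖ ^ 2 - k⁻¹ * ⟪T x, x⟫_ℝ := by
    intro x
    simp only [hX, ContinuousLinearMap.sub_apply, ContinuousLinearMap.one_apply,
      ContinuousLinearMap.smul_apply, inner_sub_left, inner_smul_left,
      starRingEnd_apply, star_trivial, real_inner_self_eq_norm_sq]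
  have hXsa : IsSelfAdjoint X := by
    rw [hX]
    have hks : IsSelfAdjoint (k⁻¹ : ℝ) := star_trivial _
    exact (IsSelfAdjoint.one (E →L[ℝ] E)).sub (hks.smul hsa)
  have hXpos : X.IsPositive := by
    refine ContinuousLinearMap.isPositive_def'.mpr ⟨hXsa, fun x => ?_⟩
    show 0 ≤ ⟪X x, x⟫_ℝ
    rw [hXinner]
    have h1 := hTupper x
    have h2 : k⁻¹ * ⟪T x, x⟫_ℝ ≤ k⁻¹ * (‖T‖ * ‖x‖ ^ 2) := by
      apply mul_le_mul_of_nonneg_left h1 (by positivity)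
    have h3 : k⁻¹ * ‖T‖ ≤ 1 := by
      rw [inv_mul_le_iff₀ hkpos]
      nlinarith
    nlinarith [sq_nonneg ‖x‖]
  have hXle : ∀ x, ⟪X x, x⟫_ℝ ≤ r * ‖x‖ ^ 2 := by
    intro x
    rw [hXinner]
    have h1 := hcoer x
    have h2 : k⁻¹ * (c * ‖x‖ ^ 2) ≤ k⁻¹ * ⟪T x, x⟫_ℝ :=
      mul_le_mul_of_nonneg_left h1 (by positivity)
    have h3 : r = 1 - c / k := by
      rw [hr, hk, eq_sub_iff_add_eq, ← add_div, div_self (by positivity : ‖T‖ + c ≠ 0)]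
    rw [h3]
    have h4 : k⁻¹ * (c * ‖x‖ ^ 2) = (c / k) * ‖x‖ ^ 2 := by ring
    nlinarith [h2]
  have hXnorm : ‖X‖ ≤ r := OpAux.opNorm_le_of_inner_le hXpos hr0 hXle
  -- the complete metric space on which we run the fixed point iteration
  let A := {y : E →L[ℝ] E // IsSelfAdjoint y ∧ ‖y‖ ≤ r}
  have hclosed : IsClosed {y : E →L[ℝ] E | IsSelfAdjoint y ∧ ‖y‖ ≤ r} := by
    apply IsClosed.inter
    · have : IsClosed {y : E →L[ℝ] E | star y = y} := isClosed_eq continuous_star continuous_id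
      exact this
    · exact isClosed_le continuous_norm continuous_const
  haveI : CompleteSpace A := hclosed.completeSpace_coe
  haveI : Nonempty A := ⟨⟨0, (IsSelfAdjoint.zero (E →L[ℝ] E)), by simp [hr0]⟩⟩
  -- the iteration map
  have hmap : ∀ y : E →L[ℝ] E, IsSelfAdjoint y → ‖y‖ ≤ r →
      IsSelfAdjoint ((2:ℝ)⁻¹ • (X + y * y)) ∧ ‖(2:ℝ)⁻¹ • (X + y * y)‖ ≤ r := by
    intro y hy hyn
    constructor
    · have h2s : IsSelfAdjoint ((2:ℝ)⁻¹) := star_trivial _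
      refine h2s.smul (hXsa.add ?_)
      show star (y * y) = y * y
      rw [star_mul, hy.star_eq]
    · have hsm := norm_smul ((2:ℝ)⁻¹) (X + y * y)
      rw [Real.norm_eq_abs, abs_of_pos (by norm_num : (0:ℝ) < 2⁻¹)] at hsm
      rw [hsm]
      have h1 : ‖X + y * y‖ ≤ r + r * r := by
        calc ‖X + y * y‖ ≤ ‖X‖ + ‖y * y‖ := norm_add_le _ _
          _ ≤ r + r * r := by
              have h2 : ‖y * y‖ ≤ ‖y‖ * ‖y‖ := norm_mul_le _ _
              nlinarith [norm_nonneg y, norm_nonneg (y*y)]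
      nlinarith
  let g : A → A := fun y => ⟨(2:ℝ)⁻¹ • (X + y.1 * y.1),
    (hmap y.1 y.2.1 y.2.2).1, (hmap y.1 y.2.1 y.2.2).2⟩
  have hcontr : ContractingWith (Real.toNNReal r) g := by
    constructor
    · rw [← NNReal.coe_lt_coe, Real.coe_toNNReal r hr0]
      exact_mod_cast hr1
    · apply LipschitzWith.of_dist_le_mul
      intro y z
      rw [Subtype.dist_eq, Subtype.dist_eq, dist_eq_norm, dist_eq_norm]
      have key : (g y).1 - (g z).1 = (2:ℝ)⁻¹ • (y.1 * (y.1 - z.1) + (y.1 - z.1) * z.1) := by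
        show (2:ℝ)⁻¹ • (X + y.1 * y.1) - (2:ℝ)⁻¹ • (X + z.1 * z.1) = _
        rw [← smul_sub]
        congr 1
        noncomm_ring
      rw [key, Real.coe_toNNReal r hr0]
      have hsm := norm_smul ((2:ℝ)⁻¹) (y.1 * (y.1 - z.1) + (y.1 - z.1) * z.1)
      rw [Real.norm_eq_abs, abs_of_pos (by norm_num : (0:ℝ) < 2⁻¹)] at hsm
      rw [hsm]
      have h3 : ‖y.1 * (y.1 - z.1) + (y.1 - z.1) * z.1‖
          ≤ ‖y.1‖ * ‖y.1 - z.1‖ + ‖y.1 - z.1‖ * ‖z.1‖ :=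
        le_trans (norm_add_le _ _) (add_le_add (norm_mul_le _ _) (norm_mul_le _ _))
      have hy := y.2.2
      have hz := z.2.2
      nlinarith [norm_nonneg (y.1 - z.1), norm_nonneg y.1, norm_nonneg z.1]
  -- the fixed point
  set y₀ : A := ContractingWith.fixedPoint g hcontr with hy₀
  have hfix : g y₀ = y₀ := hcontr.fixedPoint_isFixedPt
  set y : E →L[ℝ] E := y₀.1 with hy
  have hyfix : (2:ℝ)⁻¹ • (X + y * y) = y := congrArg Subtype.val hfix
  have hysa : IsSelfAdjoint y := y₀.2.1
  have hynorm : ‖y‖ ≤ r := y₀.2.2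
  clear_value y
  clear hfix hy hy₀
  clear_value y₀
  clear hcontr g hmap
  clear y₀
  -- the square root
  set s : E →L[ℝ] E := 1 - y with hs
  have hss : s * s = 1 - X := by
    have h2y : X + y * y = (2:ℝ) • y := by
      have := congrArg (fun z => (2:ℝ) • z) hyfix
      simpa [smul_smul] using this
    rw [hs]
    have : (1 - y) * (1 - y) = 1 - (2:ℝ) • y + y * y := by
      have h2 : (2:ℝ) • y = y + y := two_smul ℝ y
      rw [h2]
      noncomm_ring
    rw [this, ← h2y]
    abel
  have hssa : IsSelfAdjoint s := (IsSelfAdjoint.one (E →L[ℝ] E)).sub hysa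
  have hsqk : IsSelfAdjoint (Real.sqrt k : ℝ) := star_trivial _
  have hsqkpos : 0 < Real.sqrt k := Real.sqrt_pos.mpr hkpos
  have hinner : ∀ x, Real.sqrt k * (1 - r) * ‖x‖ ^ 2 ≤ ⟪(Real.sqrt k • s) x, x⟫_ℝ := by
    intro x
    have h1 : ⟪(Real.sqrt k • s) x, x⟫_ℝ = Real.sqrt k * ⟪s x, x⟫_ℝ := by
      rw [ContinuousLinearMap.smul_apply, real_inner_smul_left]
    have h2 : ⟪s x, x⟫_ℝ = ‖x‖ ^ 2 - ⟪y x, x⟫_ℝ := by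
      rw [hs]
      simp only [ContinuousLinearMap.sub_apply, ContinuousLinearMap.one_apply, inner_sub_left,
        real_inner_self_eq_norm_sq]
    have h3 : |⟪y x, x⟫_ℝ| ≤ r * ‖x‖ ^ 2 := by
      calc |⟪y x, x⟫_ℝ| ≤ ‖y x‖ * ‖x‖ := abs_real_inner_le_norm _ _
        _ ≤ ‖y‖ * ‖x‖ * ‖x‖ := by
            have := y.le_opNorm x
            nlinarith [norm_nonneg x, norm_nonneg (y x)]
        _ ≤ r * ‖x‖ ^ 2 := by nlinarith [sq_nonneg ‖x‖, norm_nonneg x, hynorm]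
    rw [h1, h2]
    have h4 : ⟪y x, x⟫_ℝ ≤ r * ‖x‖ ^ 2 := le_trans (le_abs_self _) h3
    have h5 : (1 - r) * ‖x‖ ^ 2 ≤ ‖x‖ ^ 2 - ⟪y x, x⟫_ℝ := by nlinarith
    nlinarith [hsqkpos]
  have hpos : ∀ x, 0 ≤ ⟪(Real.sqrt k • s) x, x⟫_ℝ := by
    intro x
    refine le_trans ?_ (hinner x)
    have : 0 ≤ 1 - r := by linarith
    positivity
  refine ⟨Real.sqrt k • s, ContinuousLinearMap.isPositive_def'.mpr ⟨hsqk.smul hssa, hpos⟩, ?_, ?_⟩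
  · have h1 : (Real.sqrt k • s) * (Real.sqrt k • s)
        = (Real.sqrt k * Real.sqrt k) • (s * s) := by
      rw [smul_mul_smul]
    rw [h1, Real.mul_self_sqrt hkpos.le, hss]
    have h2 : (1 : E →L[ℝ] E) - X = k⁻¹ • T := by
      rw [hX, sub_sub_cancel]
    rw [h2, smul_smul, mul_inv_cancel₀ hkpos.ne', one_smul]
  · exact ⟨Real.sqrt k * (1 - r), by nlinarith [hsqkpos], hinner⟩

end SqrtAux

theorem quasiOrthogonal_of_pairwise {G : Type u}
    [NormedAddCommGroup G] [InnerProductSpace ℝ G] [CompleteSpace G]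
    (V₁ V₂ V₃ : Submodule ℝ G)
    (h₁ : IsClosed (V₁ : Set G)) (h₂ : IsClosed (V₂ : Set G))
    (h₃ : IsClosed (V₃ : Set G))
    (ha : ∃ A : G →L[ℝ] G, MemSG A ∧
      ∀ x ∈ V₁, ∀ y ∈ (V₂ ⊔ V₃).topologicalClosure, ⟪A x, A y⟫_ℝ = 0)
    (ha' : (V₁ ⊔ (V₂ ⊔ V₃).topologicalClosure).topologicalClosure = ⊤)
    (hb : ∃ A : G →L[ℝ] G, MemSG A ∧
      ∀ x ∈ (V₁ ⊔ V₂).topologicalClosure, ∀ y ∈ V₃, ⟪A x, A y⟫_ℝ = 0)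
    (hb' : ((V₁ ⊔ V₂).topologicalClosure ⊔ V₃).topologicalClosure = ⊤) :
    MutuallyQuasiOrthogonal ![V₁, V₂, V₃] ∧
      (V₁ ⊔ V₂ ⊔ V₃).topologicalClosure = ⊤ := by
  -- the closure statement
  have hclose : (V₁ ⊔ V₂ ⊔ V₃).topologicalClosure = ⊤ := by
    have hle : ((V₁ ⊔ V₂).topologicalClosure ⊔ V₃).topologicalClosure ≤
        (V₁ ⊔ V₂ ⊔ V₃).topologicalClosure := by
      refine Submodule.topologicalClosure_minimal _ ?_
        (Submodule.isClosed_topologicalClosure _)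
      refine sup_le ?_ ?_
      · exact Submodule.topologicalClosure_mono le_sup_left
      · exact le_trans le_sup_right (Submodule.le_topologicalClosure _)
    rw [hb'] at hle
    exact top_le_iff.mp hle
  obtain ⟨A, ⟨hApos, ⟨A', hA'l, hA'r⟩, hAhs⟩, hAorth⟩ := ha
  obtain ⟨B, ⟨hBpos, ⟨B', hB'l, hB'r⟩, hBhs⟩, hBorth⟩ := hb
  clear ha' hb'
  have hA'A : A' * A = 1 := hA'l
  have hAA' : A * A' = 1 := hA'r
  have hB'B : B' * B = 1 := hB'l
  have hBB' : B * B' = 1 := hB'r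
  have hAstar : star A = A := hApos.isSelfAdjoint
  have hBstar : star B = B := hBpos.isSelfAdjoint
  have hA'star : star A' = A' := by
    have h2 : star A' * A = star (A * A') := by rw [star_mul, hAstar]
    calc star A' = star A' * (A * A') := by rw [hAA', mul_one]
      _ = (star A' * A) * A' := by rw [mul_assoc]
      _ = star (A * A') * A' := by rw [h2]
      _ = A' := by rw [hAA', star_one, one_mul]
  -- applications of the inverse relations
  have hA'Ax : ∀ v : G, A' (A v) = v := fun v => by
    have := DFunLike.congr_fun hA'l v
    simpa using this
  have hAA'x : ∀ v : G, A (A' v) = v := fun v => by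
    have := DFunLike.congr_fun hA'r v
    simpa using this
  have hAsym : ∀ u v : G, ⟪A u, v⟫_ℝ = ⟪u, A v⟫_ℝ := IsSelfAdjoint.inner_symm hApos.isSelfAdjoint
  have hBsym : ∀ u v : G, ⟪B u, v⟫_ℝ = ⟪u, B v⟫_ℝ := IsSelfAdjoint.inner_symm hBpos.isSelfAdjoint
  have hAlow : ∀ u : G, ‖u‖ ≤ (‖A'‖ + 1) * ‖A u‖ := by
    intro u
    calc ‖u‖ = ‖A' (A u)‖ := by rw [hA'Ax]
      _ ≤ ‖A'‖ * ‖A u‖ := A'.le_opNorm _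
      _ ≤ (‖A'‖ + 1) * ‖A u‖ := by nlinarith [norm_nonneg (A u)]
  have hBlow : ∀ u : G, ‖u‖ ≤ (‖B'‖ + 1) * ‖B u‖ := by
    intro u
    have hB'Bx : B' (B u) = u := by
      have := DFunLike.congr_fun hB'l u
      simpa using this
    calc ‖u‖ = ‖B' (B u)‖ := by rw [hB'Bx]
      _ ≤ ‖B'‖ * ‖B u‖ := B'.le_opNorm _
      _ ≤ (‖B'‖ + 1) * ‖B u‖ := by nlinarith [norm_nonneg (B u)]
  -- the subspace and projection
  set W : Submodule ℝ G := (V₂ ⊔ V₃).topologicalClosure with hW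
  set Kc : Submodule ℝ G := (W.map (A : G →ₗ[ℝ] G)).topologicalClosure with hKc
  haveI : CompleteSpace Kc := (Submodule.isClosed_topologicalClosure _).completeSpace_coe
  set P : G →L[ℝ] G := Kc.subtypeL ∘L Kc.orthogonalProjectionOnto with hP
  have hPsa : IsSelfAdjoint P := isSelfAdjoint_starProjection Kc
  have hPmem : ∀ v ∈ Kc, P v = v := by
    intro v hv
    show (Kc.orthogonalProjectionOnto v : G) = v
    exact Kc.starProjection_eq_self_iff.mpr hv
  have hPbot : ∀ v ∈ Kcᗮ, P v = 0 := by
    intro v hv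
    show (Kc.orthogonalProjectionOnto v : G) = 0
    rw [Submodule.orthogonalProjectionOnto_eq_zero_iff.mpr hv, Submodule.coe_zero]
  have hPP : ∀ v : G, P (P v) = P v := fun v => hPmem _ (by
    show (Kc.orthogonalProjectionOnto v : G) ∈ Kc
    exact SetLike.coe_mem _)
  set Q : G →L[ℝ] G := A' * P * A with hQ
  have hQapp : ∀ v : G, Q v = A' (P (A v)) := fun v => rfl
  have hQ1 : ∀ x ∈ V₁, Q x = 0 := by
    intro x hx
    have hmem : A x ∈ Kcᗮ := by
      rw [Submodule.mem_orthogonal']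
      intro u hu
      have hK : Kc ≤ (innerSL ℝ (A x)).ker := by
        refine Submodule.topologicalClosure_minimal _ ?_ (ContinuousLinearMap.isClosed_ker _)
        rintro _ ⟨w, hw, rfl⟩
        show ⟪A x, A w⟫_ℝ = 0
        exact hAorth x hx w hw
      exact hK hu
    rw [hQapp, hPbot _ hmem, map_zero]
  have hQ2 : ∀ y ∈ W, Q y = y := by
    intro y hy
    have hmem : A y ∈ Kc := Submodule.le_topologicalClosure _ (Submodule.mem_map_of_mem hy)
    rw [hQapp, hPmem _ hmem, hA'Ax]
  have hQQ : Q * Q = Q := by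
    ext v
    show Q (Q v) = Q v
    rw [hQapp (Q v), hQapp v, hAA'x, hPP]
  -- the operators M and N
  set M : G →L[ℝ] G := A * A with hM
  set N : G →L[ℝ] G := B * B with hN
  have hone : IsHilbertSchmidt ((1 : G →L[ℝ] G) - A) := by
    rw [ContinuousLinearMap.one_def]; exact hAhs
  have honeB : IsHilbertSchmidt ((1 : G →L[ℝ] G) - B) := by
    rw [ContinuousLinearMap.one_def]; exact hBhs
  have hsm : IsHilbertSchmidt (M - 1) := by
    have h1 : M - 1 = (A + 1) * (A - 1) := by rw [hM]; noncomm_ring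
    have h2 : IsHilbertSchmidt (A - 1) := by
      have := hone.neg
      rwa [neg_sub] at this
    rw [h1]
    exact h2.mul_left _
  have hsn : IsHilbertSchmidt (N - 1) := by
    have h1 : N - 1 = (B + 1) * (B - 1) := by rw [hN]; noncomm_ring
    have h2 : IsHilbertSchmidt (B - 1) := by
      have := honeB.neg
      rwa [neg_sub] at this
    rw [h1]
    exact h2.mul_left _
  -- star Q - Q is Hilbert-Schmidt
  have hQstar : star Q = A * P * A' := by
    rw [hQ]
    simp only [star_mul, hAstar, hA'star, hPsa.star_eq, mul_assoc]
  have hAmulx : ∀ C : G →L[ℝ] G, A * (A' * C) = C := fun C => by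
    rw [← mul_assoc, hAA', one_mul]
  have hA'mulx : ∀ C : G →L[ℝ] G, A' * (A * C) = C := fun C => by
    rw [← mul_assoc, hA'A, one_mul]
  have hsKq : IsHilbertSchmidt (star Q - Q) := by
    have e1 : M * Q * (A' * A') = A * P * A' := by
      rw [hM, hQ]
      simp only [mul_assoc, hAmulx, hA'mulx, hAA', hA'A, mul_one, one_mul]
    have e2 : Q * M * (A' * A') = Q := by
      rw [hM, hQ]
      simp only [mul_assoc, hAmulx, hA'mulx, hAA', hA'A, mul_one, one_mul]
    have e3 : star Q - Q = (((M - 1) * Q) - (Q * (M - 1))) * (A' * A') := by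
      have e4 : (((M - 1) * Q) - (Q * (M - 1))) * (A' * A')
          = M * Q * (A' * A') - Q * M * (A' * A') := by noncomm_ring
      rw [e4, e1, e2, hQstar]
    rw [e3]
    exact ((hsm.mul_right Q).sub (hsm.mul_left Q)).mul_right _
  -- the operator R
  set R : G →L[ℝ] G := star (1 - Q) * M * (1 - Q) + star Q * N * Q with hR
  have hsR : IsHilbertSchmidt ((1 : G →L[ℝ] G) - R) := by
    have hRid : R - 1 = ((star Q - Q) * Q + ((star Q - Q) * Q - (star Q - Q)))
        + ((Q * Q - Q) + (Q * Q - Q))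
        + ((1 - star Q) * (M - 1) * (1 - Q) + star Q * (N - 1) * Q) := by
      rw [hR, star_sub, star_one]
      noncomm_ring
    rw [hQQ, sub_self, add_zero, add_zero] at hRid
    have h1 : IsHilbertSchmidt (R - 1) := by
      rw [hRid]
      exact ((hsKq.mul_right Q).add ((hsKq.mul_right Q).sub hsKq)).add
        (((hsm.mul_left _).mul_right _).add ((hsn.mul_left _).mul_right _))
    have := h1.neg
    rwa [neg_sub] at this
  -- the inner product formula for R
  have hRinner : ∀ x y : G, ⟪R x, y⟫_ℝ
      = ⟪A ((1 - Q) x), A ((1 - Q) y)⟫_ℝ + ⟪B (Q x), B (Q y)⟫_ℝ := by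
    intro x y
    have e1 : ⟪(star (1 - Q) * M * (1 - Q)) x, y⟫_ℝ = ⟪A ((1 - Q) x), A ((1 - Q) y)⟫_ℝ := by
      rw [ContinuousLinearMap.mul_apply, ContinuousLinearMap.mul_apply,
        ContinuousLinearMap.star_eq_adjoint, ContinuousLinearMap.adjoint_inner_left]
      rw [show M ((1 - Q) x) = A (A ((1 - Q) x)) from rfl]
      rw [hAsym]
    have e2 : ⟪(star Q * N * Q) x, y⟫_ℝ = ⟪B (Q x), B (Q y)⟫_ℝ := by
      rw [ContinuousLinearMap.mul_apply, ContinuousLinearMap.mul_apply,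
        ContinuousLinearMap.star_eq_adjoint, ContinuousLinearMap.adjoint_inner_left]
      rw [show N (Q x) = B (B (Q x)) from rfl]
      rw [hBsym]
    rw [hR, ContinuousLinearMap.add_apply, inner_add_left, e1, e2]
  -- self-adjointness of R
  have hRsa : IsSelfAdjoint R := by
    rw [ContinuousLinearMap.isSelfAdjoint_iff_isSymmetric]
    intro x y
    show ⟪R x, y⟫_ℝ = ⟪x, R y⟫_ℝ
    calc ⟪R x, y⟫_ℝ = ⟪A ((1 - Q) x), A ((1 - Q) y)⟫_ℝ + ⟪B (Q x), B (Q y)⟫_ℝ := hRinner x y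
      _ = ⟪A ((1 - Q) y), A ((1 - Q) x)⟫_ℝ + ⟪B (Q y), B (Q x)⟫_ℝ := by
          rw [real_inner_comm (A ((1 - Q) x)) (A ((1 - Q) y)),
            real_inner_comm (B (Q x)) (B (Q y))]
      _ = ⟪R y, x⟫_ℝ := (hRinner y x).symm
      _ = ⟪x, R y⟫_ℝ := real_inner_comm _ _
  -- coercivity of R
  obtain ⟨c, hc, hRcoer⟩ : ∃ c : ℝ, 0 < c ∧ ∀ x : G, c * ‖x‖ ^ 2 ≤ ⟪R x, x⟫_ℝ := by
    set a : ℝ := ‖A'‖ + 1 with ha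
    set b : ℝ := ‖B'‖ + 1 with hb2
    set d : ℝ := max a b with hd
    have ha0 : 0 < a := by positivity
    have hb0 : 0 < b := by positivity
    have hd0 : 0 < d := lt_max_of_lt_left ha0
    refine ⟨(2 * d ^ 2)⁻¹, by positivity, fun x => ?_⟩
    have hx1 : ‖x‖ ≤ ‖(1 - Q) x‖ + ‖Q x‖ := by
      have : (1 - Q) x + Q x = x := by
        rw [ContinuousLinearMap.sub_apply, ContinuousLinearMap.one_apply, sub_add_cancel]
      calc ‖x‖ = ‖(1 - Q) x + Q x‖ := by rw [this]
        _ ≤ ‖(1 - Q) x‖ + ‖Q x‖ := norm_add_le _ _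
    have hu := hAlow ((1 - Q) x)
    have hv := hBlow (Q x)
    have hval : ⟪R x, x⟫_ℝ = ‖A ((1 - Q) x)‖ ^ 2 + ‖B (Q x)‖ ^ 2 := by
      rw [hRinner x x, real_inner_self_eq_norm_sq, real_inner_self_eq_norm_sq]
    rw [hval]
    have had : a ≤ d := le_max_left _ _
    have hbd : b ≤ d := le_max_right _ _
    have h5 : ‖(1 - Q) x‖ ≤ d * ‖A ((1 - Q) x)‖ :=
      le_trans hu (mul_le_mul_of_nonneg_right had (norm_nonneg _))
    have h6 : ‖Q x‖ ≤ d * ‖B (Q x)‖ :=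
      le_trans hv (mul_le_mul_of_nonneg_right hbd (norm_nonneg _))
    have h7 : ‖x‖ ≤ d * (‖A ((1 - Q) x)‖ + ‖B (Q x)‖) := by
      rw [mul_add]
      linarith [hx1, h5, h6]
    have h8 := mul_self_le_mul_self (norm_nonneg x) h7
    have hsq : ‖x‖ ^ 2 ≤ 2 * d ^ 2 * (‖A ((1 - Q) x)‖ ^ 2 + ‖B (Q x)‖ ^ 2) := by
      nlinarith [h8, sq_nonneg (‖A ((1 - Q) x)‖ - ‖B (Q x)‖), sq_nonneg d]
    calc (2 * d ^ 2)⁻¹ * ‖x‖ ^ 2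
        ≤ (2 * d ^ 2)⁻¹ * (2 * d ^ 2 * (‖A ((1 - Q) x)‖ ^ 2 + ‖B (Q x)‖ ^ 2)) := by
          apply mul_le_mul_of_nonneg_left hsq (by positivity)
      _ = ‖A ((1 - Q) x)‖ ^ 2 + ‖B (Q x)‖ ^ 2 := by
          rw [← mul_assoc, inv_mul_cancel₀ (by positivity : (2 * d ^ 2 : ℝ) ≠ 0), one_mul]
  -- the square root
  obtain ⟨S, hSpos, hSS, δ, hδ, hScoer⟩ := SqrtAux.exists_sqrt hRsa hc hRcoer
  have Sinv : IsBoundedlyInvertible S :=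
    OpAux.isBoundedlyInvertible_of_coercive hSpos.isSelfAdjoint hδ hScoer
  -- 1 + S is invertible
  have h1Ssa : IsSelfAdjoint ((1 : G →L[ℝ] G) + S) :=
    (IsSelfAdjoint.one (G →L[ℝ] G)).add hSpos.isSelfAdjoint
  have h1Scoer : ∀ x : G, 1 * ‖x‖ ^ 2 ≤ ⟪((1 : G →L[ℝ] G) + S) x, x⟫_ℝ := by
    intro x
    rw [ContinuousLinearMap.add_apply, ContinuousLinearMap.one_apply, inner_add_left,
      real_inner_self_eq_norm_sq]
    have := hSpos.inner_nonneg' x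
    nlinarith
  obtain ⟨J, hJl, hJr⟩ :=
    OpAux.isBoundedlyInvertible_of_coercive h1Ssa one_pos h1Scoer
  have hJ2 : ((1 : G →L[ℝ] G) + S) * J = 1 := hJr
  -- 1 - S is Hilbert-Schmidt
  have hs1S : IsHilbertSchmidt ((1 : G →L[ℝ] G) - S) := by
    have hfac : ((1 : G →L[ℝ] G) - S) * (1 + S) = 1 - R := by
      rw [← hSS]; noncomm_ring
    have heq : (1 : G →L[ℝ] G) - S = (1 - R) * J := by
      calc (1 : G →L[ℝ] G) - S = (1 - S) * ((1 + S) * J) := by rw [hJ2, mul_one]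
        _ = ((1 - S) * (1 + S)) * J := by rw [mul_assoc]
        _ = (1 - R) * J := by rw [hfac]
    rw [heq]
    exact hsR.mul_right J
  -- the orthogonality computation
  have hSsym : ∀ u v : G, ⟪S u, v⟫_ℝ = ⟪u, S v⟫_ℝ :=
    IsSelfAdjoint.inner_symm hSpos.isSelfAdjoint
  have hkey : ∀ x y : G, ⟪S x, S y⟫_ℝ
      = ⟪A ((1 - Q) y), A ((1 - Q) x)⟫_ℝ + ⟪B (Q y), B (Q x)⟫_ℝ := by
    intro x y
    calc ⟪S x, S y⟫_ℝ = ⟪x, S (S y)⟫_ℝ := hSsym x (S y)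
      _ = ⟪x, (S * S) y⟫_ℝ := by rw [ContinuousLinearMap.mul_apply]
      _ = ⟪x, R y⟫_ℝ := by rw [hSS]
      _ = ⟪R y, x⟫_ℝ := real_inner_comm _ _
      _ = _ := hRinner y x
  have hV₂W : V₂ ≤ W := le_trans le_sup_left (Submodule.le_topologicalClosure _)
  have hV₃W : V₃ ≤ W := le_trans le_sup_right (Submodule.le_topologicalClosure _)
  have hsub0 : ∀ z ∈ W, (1 - Q) z = 0 := by
    intro z hz
    rw [ContinuousLinearMap.sub_apply, ContinuousLinearMap.one_apply, hQ2 z hz, sub_self]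
  have o12 : ∀ x ∈ V₁, ∀ y ∈ V₂, ⟪S x, S y⟫_ℝ = 0 := by
    intro x hx y hy
    rw [hkey, hsub0 y (hV₂W hy), map_zero, inner_zero_left, hQ1 x hx, map_zero,
      inner_zero_right, add_zero]
  have o13 : ∀ x ∈ V₁, ∀ y ∈ V₃, ⟪S x, S y⟫_ℝ = 0 := by
    intro x hx y hy
    rw [hkey, hsub0 y (hV₃W hy), map_zero, inner_zero_left, hQ1 x hx, map_zero,
      inner_zero_right, add_zero]
  have o23 : ∀ x ∈ V₂, ∀ y ∈ V₃, ⟪S x, S y⟫_ℝ = 0 := by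
    intro x hx y hy
    rw [hkey, hsub0 x (hV₂W hx), map_zero, inner_zero_right, hQ2 y (hV₃W hy), hQ2 x (hV₂W hx)]
    rw [zero_add, real_inner_comm]
    exact hBorth x ((le_trans le_sup_right (Submodule.le_topologicalClosure (V₁ ⊔ V₂)) :
      V₂ ≤ (V₁ ⊔ V₂).topologicalClosure) hx) y hy
  refine ⟨⟨S, ⟨hSpos, Sinv, ?_⟩, ?_⟩, hclose⟩
  · rw [← ContinuousLinearMap.one_def]
    exact hs1S
  · intro i j hij x hx y hy
    fin_cases i <;> fin_cases j <;>
      first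
        | exact absurd rfl hij
        | (exact o12 x (by simpa using hx) y (by simpa using hy))
        | (exact o13 x (by simpa using hx) y (by simpa using hy))
        | (exact o23 x (by simpa using hx) y (by simpa using hy))
        | (rw [real_inner_comm]
           first
             | exact o12 y (by simpa using hy) x (by simpa using hx)
             | exact o13 y (by simpa using hy) x (by simpa using hx)
             | exact o23 y (by simpa using hy) x (by simpa using hx))


end
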